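/- There exists a constant C > 0 such that for every real u ≥ 2 and every real α with 0 ≤ α ≤ 1, writing Rx(u, α) = Σ x and Ry(u, α) = Σ y, where both sums are taken over all pairs of integers (x, y) with 1 ≤ x ≤ u, 1 ≤ y ≤ α·x, and gcd(x, y) = 1, one has |Rx(u, α) − (2/π²)·u³·α| ≤ C·u²·log u and |Ry(u, α) − (1/π²)·u³·α²| ≤ C·u²·log u. -/

import Mathlib

open scoped Classical

/-- `Rx(u,α) = Σ x` over primitive integer pairs (x,y) with 1 ≤ x ≤ u, 1 ≤ y ≤ α·x. -/
noncomputable def Rx (u α : ℝ) : ℝ :=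
  ∑ x ∈ Finset.Icc 1 ⌊u⌋₊, ∑ y ∈ Finset.Icc 1 ⌊u⌋₊,
    if (y : ℝ) ≤ α * (x : ℝ) ∧ Nat.gcd x y = 1 then (x : ℝ) else 0

/-- `Ry(u,α) = Σ y` over primitive integer pairs (x,y) with 1 ≤ x ≤ u, 1 ≤ y ≤ α·x. -/
noncomputable def Ry (u α : ℝ) : ℝ :=
  ∑ x ∈ Finset.Icc 1 ⌊u⌋₊, ∑ y ∈ Finset.Icc 1 ⌊u⌋₊,
    if (y : ℝ) ≤ α * (x : ℝ) ∧ Nat.gcd x y = 1 then (y : ℝ) else 0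

open ArithmeticFunction Finset
open scoped ArithmeticFunction.Moebius


noncomputable def mg : ℕ → ℝ := fun n => if n = 0 then 0 else (μ n : ℝ)/(n:ℝ)^2

lemma mg_abs (n : ℕ) : |mg n| ≤ ((n:ℝ)^2)⁻¹ := by
  unfold mg
  rcases eq_or_ne n 0 with h | h
  · simp [h]
  · rw [if_neg h, abs_div, div_eq_mul_inv, abs_of_nonneg (by positivity : (0:ℝ) ≤ (n:ℝ)^2)]
    have h1 : |((μ n : ℤ) : ℝ)| ≤ 1 := by
      rw [← Int.cast_abs]
      exact_mod_cast abs_moebius_le_one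
    nlinarith [inv_nonneg.mpr (by positivity : (0:ℝ) ≤ (n:ℝ)^2), h1, abs_nonneg ((μ n : ℤ):ℝ)]

lemma summable_inv_sq : Summable (fun n : ℕ => ((n:ℝ)^2)⁻¹) := by
  simpa using Real.summable_nat_rpow_inv.mpr (by norm_num : (1:ℝ) < 2)

lemma mg_summable : Summable mg :=
  Summable.of_abs (summable_inv_sq.of_nonneg_of_le (fun n => abs_nonneg _) mg_abs)

lemma mg_tsum : ∑' n, mg n = 6 / Real.pi ^ 2 := by
  have hz : riemannZeta 2 = (Real.pi : ℂ)^2/6 := riemannZeta_two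
  have hre : (1:ℝ) < (2:ℂ).re := by norm_num
  have hmul := LSeries_zeta_mul_Lseries_moebius (s := 2) hre
  rw [LSeries_zeta_eq_riemannZeta hre, hz] at hmul
  have hpi : (Real.pi : ℂ) ^ 2 ≠ 0 := by
    simpa using Real.pi_ne_zero
  have hL : LSeries (fun n => ((μ n : ℤ) : ℂ)) 2 = 6 / (Real.pi : ℂ)^2 := by
    field_simp at hmul ⊢
    linear_combination hmul
  have hterm : (fun n => ((mg n : ℝ) : ℂ)) = fun n => LSeries.term (fun n => ((μ n : ℤ) : ℂ)) 2 n := by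
    funext n
    rcases eq_or_ne n 0 with h | h
    · simp [mg, h, LSeries.term]
    · rw [LSeries.term_def, if_neg h]
      simp only [mg, if_neg h]
      push_cast
      rw [Complex.cpow_ofNat]
  have : ((∑' n, mg n : ℝ) : ℂ) = 6 / (Real.pi : ℂ)^2 := by
    rw [Complex.ofReal_tsum, hterm]
    exact hL
  have h2 : ((∑' n, mg n : ℝ) : ℂ) = ((6 / Real.pi^2 : ℝ) : ℂ) := by
    rw [this]; push_cast; ring
  exact_mod_cast h2

lemma tail_sq_le (N : ℕ) (hN : 1 ≤ N) :
    ∑' n : ℕ, (((n + (N+1) : ℕ):ℝ)^2)⁻¹ ≤ 1/(N:ℝ) := by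
  have hsum : Summable (fun n : ℕ => (((n + (N+1) : ℕ):ℝ)^2)⁻¹) := by
    have := (summable_nat_add_iff (N+1)).mpr summable_inv_sq
    exact this.congr (fun n => by push_cast; ring_nf)
  refine Summable.tsum_le_of_sum_le hsum (fun s => ?_)
  classical
  set M := (s.sup _root_.id) + N + 1 with hM
  have hmap : ∑ n ∈ s, (((n + (N+1) : ℕ):ℝ)^2)⁻¹
      = ∑ i ∈ s.image (fun n => n + (N+1)), (((i:ℕ):ℝ)^2)⁻¹ := by
    rw [Finset.sum_image]
    intro a _ b _ h
    simp only at h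
    omega
  rw [hmap]
  have hsub : s.image (fun n => n + (N+1)) ⊆ Finset.Ioc N M := by
    intro i hi
    simp only [Finset.mem_image] at hi
    obtain ⟨n, hn, rfl⟩ := hi
    have := Finset.le_sup (f := _root_.id) hn
    simp only [_root_.id] at this
    simp only [Finset.mem_Ioc]
    omega
  calc ∑ i ∈ s.image (fun n => n + (N+1)), (((i:ℕ):ℝ)^2)⁻¹
      ≤ ∑ i ∈ Finset.Ioc N M, (((i:ℕ):ℝ)^2)⁻¹ :=
        Finset.sum_le_sum_of_subset_of_nonneg hsub (fun i _ _ => by positivity)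
    _ ≤ (N:ℝ)⁻¹ - (M:ℝ)⁻¹ := sum_Ioc_inv_sq_le_sub (by omega) (by omega)
    _ ≤ 1/(N:ℝ) := by
        rw [one_div]
        have : (0:ℝ) ≤ (M:ℝ)⁻¹ := by positivity
        linarith

lemma moebius_partial (N : ℕ) (hN : 1 ≤ N) :
    |∑ d ∈ Finset.Icc 1 N, (μ d : ℝ)/(d:ℝ)^2 - 6/Real.pi^2| ≤ 1/(N:ℝ) := by
  have hsplit := Summable.sum_add_tsum_nat_add (f := mg) (N+1) mg_summable
  have hpart : ∑ i ∈ Finset.range (N+1), mg i = ∑ d ∈ Finset.Icc 1 N, (μ d : ℝ)/(d:ℝ)^2 := by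
    have : Finset.range (N+1) = insert 0 (Finset.Icc 1 N) := by
      ext i; simp [Nat.lt_succ_iff]; omega
    rw [this, Finset.sum_insert (by simp)]
    have h0 : mg 0 = 0 := by simp [mg]
    rw [h0, zero_add]
    refine Finset.sum_congr rfl (fun d hd => ?_)
    simp only [Finset.mem_Icc] at hd
    simp [mg, show d ≠ 0 by omega]
  have htail : |∑' n : ℕ, mg (n + (N+1))| ≤ 1/(N:ℝ) := by
    have hs : Summable (fun n : ℕ => mg (n + (N+1))) :=
      (summable_nat_add_iff (N+1)).mpr mg_summable
    calc |∑' n : ℕ, mg (n + (N+1))| ≤ ∑' n : ℕ, |mg (n + (N+1))| := by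
          simpa [Real.norm_eq_abs] using norm_tsum_le_tsum_norm (f := fun n : ℕ => mg (n + (N+1))) (by simpa [Real.norm_eq_abs] using hs.abs)
      _ ≤ ∑' n : ℕ, (((n + (N+1) : ℕ):ℝ)^2)⁻¹ := by
          refine Summable.tsum_le_tsum (fun n => ?_) hs.abs ?_
          · exact_mod_cast mg_abs (n + (N+1))
          · exact ((summable_nat_add_iff (N+1)).mpr summable_inv_sq).congr
              (fun n => by push_cast; ring_nf)
      _ ≤ 1/(N:ℝ) := tail_sq_le N hN
  rw [← hpart]
  have : ∑ i ∈ Finset.range (N+1), mg i - 6/Real.pi^2 = -(∑' n : ℕ, mg (n + (N+1))) := by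
    rw [← mg_tsum, ← hsplit]; ring
  rw [this, abs_neg]
  exact htail

lemma filter_dvd_eq (d N : ℕ) (hd : 0 < d) :
    Finset.filter (fun x => d ∣ x) (Finset.Icc 1 N) =
      Finset.image (fun m => d * m) (Finset.Icc 1 (N / d)) := by
  ext a
  simp only [Finset.mem_filter, Finset.mem_Icc, Finset.mem_image]
  constructor
  · rintro ⟨⟨h1, h2⟩, m, rfl⟩
    refine ⟨m, ⟨?_, (Nat.le_div_iff_mul_le hd).mpr (by rwa [Nat.mul_comm])⟩, rfl⟩
    rcases Nat.eq_zero_or_pos m with hm | hm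
    · simp [hm] at h1
    · exact hm
  · rintro ⟨m, ⟨h1, h2⟩, rfl⟩
    have := (Nat.le_div_iff_mul_le hd).mp h2
    exact ⟨⟨Nat.one_le_iff_ne_zero.mpr (by positivity), by rwa [Nat.mul_comm] at this⟩, ⟨m, rfl⟩⟩

lemma sum_dvd_reindex (d N : ℕ) (hd : 0 < d) (h : ℕ → ℝ) :
    ∑ x ∈ Finset.Icc 1 N, (if d ∣ x then h x else 0)
      = ∑ m ∈ Finset.Icc 1 (N/d), h (d*m) := by
  rw [← Finset.sum_filter, filter_dvd_eq d N hd, Finset.sum_image]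
  intro a _ b _ hab
  exact Nat.eq_of_mul_eq_mul_left hd hab

lemma moebius_indicator {N x y : ℕ} (hx1 : 1 ≤ x) (hxN : x ≤ N) (hy : 1 ≤ y) :
    ∑ d ∈ Finset.Icc 1 N, (if d ∣ x ∧ d ∣ y then ((μ d : ℤ):ℝ) else 0)
      = if Nat.gcd x y = 1 then 1 else 0 := by
  classical
  have hg1 : 1 ≤ Nat.gcd x y := Nat.one_le_iff_ne_zero.mpr (Nat.gcd_ne_zero_left (by omega))
  have hgx : Nat.gcd x y ≤ x := Nat.le_of_dvd (by omega) (Nat.gcd_dvd_left x y)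
  have hcond : ∀ d, (d ∣ x ∧ d ∣ y) ↔ d ∣ Nat.gcd x y := fun d =>
    ⟨fun ⟨h1, h2⟩ => Nat.dvd_gcd h1 h2, fun h => ⟨h.trans (Nat.gcd_dvd_left x y),
      h.trans (Nat.gcd_dvd_right x y)⟩⟩
  have hfil : Finset.filter (fun d => d ∣ x ∧ d ∣ y) (Finset.Icc 1 N) = (Nat.gcd x y).divisors := by
    ext d
    simp only [Finset.mem_filter, Finset.mem_Icc, Nat.mem_divisors, hcond]
    constructor
    · rintro ⟨⟨h1, h2⟩, h3⟩; exact ⟨h3, by omega⟩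
    · rintro ⟨h1, h2⟩
      have := Nat.le_of_dvd (by omega) h1
      have h4 := Nat.pos_of_dvd_of_pos h1 (by omega)
      exact ⟨⟨h4, by omega⟩, h1⟩
  rw [← Finset.sum_filter, hfil]
  have h2 := congrArg (fun f : ArithmeticFunction ℤ => f (Nat.gcd x y)) moebius_mul_coe_zeta
  simp only [coe_mul_zeta_apply, one_apply] at h2
  calc (∑ d ∈ (Nat.gcd x y).divisors, ((μ d : ℤ):ℝ)) = ((∑ d ∈ (Nat.gcd x y).divisors, μ d : ℤ) : ℝ) := by push_cast; rfl
    _ = ((if Nat.gcd x y = 1 then 1 else 0 : ℤ) : ℝ) := by rw [h2]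
    _ = if Nat.gcd x y = 1 then 1 else 0 := by split <;> simp

lemma filter_le_floor (N x : ℕ) (α : ℝ) (h0 : 0 ≤ α) (h1 : α ≤ 1) (hxN : x ≤ N) :
    Finset.filter (fun y : ℕ => (y:ℝ) ≤ α * x) (Finset.Icc 1 N) = Finset.Icc 1 ⌊α * x⌋₊ := by
  have hfl : ⌊α * (x:ℝ)⌋₊ ≤ N := by
    calc ⌊α * (x:ℝ)⌋₊ ≤ ⌊(x:ℝ)⌋₊ := Nat.floor_le_floor (by nlinarith [Nat.cast_nonneg (α := ℝ) x])
      _ = x := Nat.floor_natCast x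
      _ ≤ N := hxN
  ext y
  simp only [Finset.mem_filter, Finset.mem_Icc]
  constructor
  · rintro ⟨⟨hy1, _⟩, hy3⟩
    exact ⟨hy1, Nat.le_floor hy3⟩
  · rintro ⟨hy1, hy2⟩
    refine ⟨⟨hy1, le_trans hy2 hfl⟩, ?_⟩
    calc (y:ℝ) ≤ ⌊α * (x:ℝ)⌋₊ := Nat.cast_le.mpr hy2
      _ ≤ α * x := Nat.floor_le (by positivity)

lemma cutoff_sum (N x : ℕ) (α : ℝ) (h0 : 0 ≤ α) (h1 : α ≤ 1) (hxN : x ≤ N) (F : ℕ → ℝ) :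
    ∑ y ∈ Finset.Icc 1 N, (if (y:ℝ) ≤ α * x then F y else 0)
      = ∑ y ∈ Finset.Icc 1 ⌊α * x⌋₊, F y := by
  rw [← Finset.sum_filter, filter_le_floor N x α h0 h1 hxN]

lemma key_double (N : ℕ) (α : ℝ) (h0 : 0 ≤ α) (h1 : α ≤ 1) (W : ℕ → ℕ → ℝ) :
    (∑ x ∈ Finset.Icc 1 N, ∑ y ∈ Finset.Icc 1 N,
        if (y : ℝ) ≤ α * (x : ℝ) ∧ Nat.gcd x y = 1 then W x y else 0)
      = ∑ d ∈ Finset.Icc 1 N, (μ d : ℝ) *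
          ∑ m ∈ Finset.Icc 1 (N/d), ∑ k ∈ Finset.Icc 1 ⌊α * m⌋₊, W (d*m) (d*k) := by
  classical
  have step1 : (∑ x ∈ Finset.Icc 1 N, ∑ y ∈ Finset.Icc 1 N,
        if (y : ℝ) ≤ α * (x : ℝ) ∧ Nat.gcd x y = 1 then W x y else 0)
      = ∑ x ∈ Finset.Icc 1 N, ∑ y ∈ Finset.Icc 1 ⌊α * x⌋₊,
          (if Nat.gcd x y = 1 then W x y else 0) := by
    refine Finset.sum_congr rfl (fun x hx => ?_)
    simp only [Finset.mem_Icc] at hx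
    rw [← cutoff_sum N x α h0 h1 hx.2 (fun y => if Nat.gcd x y = 1 then W x y else 0)]
    refine Finset.sum_congr rfl (fun y _ => ?_)
    by_cases hc1 : (y:ℝ) ≤ α * x <;> by_cases hc2 : Nat.gcd x y = 1 <;> simp [hc1, hc2]
  have step2 : (∑ x ∈ Finset.Icc 1 N, ∑ y ∈ Finset.Icc 1 ⌊α * x⌋₊,
          (if Nat.gcd x y = 1 then W x y else 0))
      = ∑ x ∈ Finset.Icc 1 N, ∑ y ∈ Finset.Icc 1 ⌊α * x⌋₊,
          ∑ d ∈ Finset.Icc 1 N, (if d ∣ x ∧ d ∣ y then ((μ d : ℤ):ℝ) * W x y else 0) := by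
    refine Finset.sum_congr rfl (fun x hx => Finset.sum_congr rfl (fun y hy => ?_))
    simp only [Finset.mem_Icc] at hx hy
    calc (if Nat.gcd x y = 1 then W x y else 0)
        = (if Nat.gcd x y = 1 then (1:ℝ) else 0) * W x y := by split <;> ring
      _ = (∑ d ∈ Finset.Icc 1 N, if d ∣ x ∧ d ∣ y then ((μ d : ℤ):ℝ) else 0) * W x y := by
          rw [moebius_indicator hx.1 hx.2 hy.1]
      _ = ∑ d ∈ Finset.Icc 1 N, (if d ∣ x ∧ d ∣ y then ((μ d : ℤ):ℝ) * W x y else 0) := by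
          rw [Finset.sum_mul]
          exact Finset.sum_congr rfl (fun d _ => by split <;> ring)
  have step3 : (∑ x ∈ Finset.Icc 1 N, ∑ y ∈ Finset.Icc 1 ⌊α * x⌋₊,
          ∑ d ∈ Finset.Icc 1 N, (if d ∣ x ∧ d ∣ y then ((μ d : ℤ):ℝ) * W x y else 0))
      = ∑ d ∈ Finset.Icc 1 N, ∑ x ∈ Finset.Icc 1 N, ∑ y ∈ Finset.Icc 1 ⌊α * x⌋₊,
          (if d ∣ x ∧ d ∣ y then ((μ d : ℤ):ℝ) * W x y else 0) := by
    rw [← Finset.sum_comm]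
    exact Finset.sum_congr rfl (fun x _ => Finset.sum_comm)
  rw [step1, step2, step3]
  refine Finset.sum_congr rfl (fun d hd => ?_)
  simp only [Finset.mem_Icc] at hd
  have hd0 : 0 < d := by omega
  have step4 : (∑ x ∈ Finset.Icc 1 N, ∑ y ∈ Finset.Icc 1 ⌊α * x⌋₊,
          (if d ∣ x ∧ d ∣ y then ((μ d : ℤ):ℝ) * W x y else 0))
      = ∑ x ∈ Finset.Icc 1 N, (if d ∣ x then
          (∑ k ∈ Finset.Icc 1 (⌊α * x⌋₊ / d), ((μ d : ℤ):ℝ) * W x (d*k)) else 0) := by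
    refine Finset.sum_congr rfl (fun x hx => ?_)
    by_cases hdx : d ∣ x
    · rw [if_pos hdx, ← sum_dvd_reindex d ⌊α * (x:ℝ)⌋₊ hd0 (fun y => ((μ d : ℤ):ℝ) * W x y)]
      exact Finset.sum_congr rfl (fun y _ => by by_cases hdy : d ∣ y <;> simp [hdx, hdy])
    · rw [if_neg hdx]
      refine Finset.sum_eq_zero (fun y _ => by simp [hdx])
  rw [step4, sum_dvd_reindex d N hd0
      (fun x => ∑ k ∈ Finset.Icc 1 (⌊α * x⌋₊ / d), ((μ d : ℤ):ℝ) * W x (d*k)), Finset.mul_sum]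
  refine Finset.sum_congr rfl (fun m hm => ?_)
  have hfloor : ⌊α * ((d*m : ℕ):ℝ)⌋₊ / d = ⌊α * m⌋₊ := by
    rw [← Nat.floor_div_natCast (α * ((d*m : ℕ):ℝ)) d]
    congr 1
    push_cast
    field_simp
  rw [hfloor, Finset.mul_sum]
lemma sum_Icc_id (K : ℕ) : ∑ k ∈ Finset.Icc 1 K, (k:ℝ) = K*(K+1)/2 := by
  induction K with
  | zero => simp
  | succ n ih =>
    rw [Finset.sum_Icc_succ_top (by omega)]
    push_cast
    rw [ih]; ring

lemma sum_sq_bounds (M : ℕ) :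
    (M:ℝ)^3/3 ≤ ∑ m ∈ Finset.Icc 1 M, (m:ℝ)^2 ∧
    ∑ m ∈ Finset.Icc 1 M, (m:ℝ)^2 ≤ (M:ℝ)^3/3 + (M:ℝ)^2 := by
  induction M with
  | zero => simp
  | succ n ih =>
    obtain ⟨h1, h2⟩ := ih
    rw [Finset.sum_Icc_succ_top (by omega)]
    push_cast
    constructor <;> nlinarith [Nat.cast_nonneg (α := ℝ) n]

lemma sum_id_le_sq (M : ℕ) : ∑ m ∈ Finset.Icc 1 M, (m:ℝ) ≤ (M:ℝ)^2 := by
  rw [sum_Icc_id]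
  rcases Nat.eq_zero_or_pos M with h | h
  · simp [h]
  · have : (1:ℝ) ≤ M := by exact_mod_cast h
    nlinarith

lemma sum_inv_le (N : ℕ) (hN : 1 ≤ N) :
    ∑ d ∈ Finset.Icc 1 N, 1/(d:ℝ) ≤ 1 + Real.log N := by
  have h := harmonic_le_one_add_log N
  have heq : ∀ n : ℕ, ((harmonic n : ℚ) : ℝ) = ∑ d ∈ Finset.Icc 1 n, 1/(d:ℝ) := by
    intro n
    induction n with
    | zero => simp [harmonic]
    | succ k ih =>
      rw [harmonic_succ, Finset.sum_Icc_succ_top (by omega)]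
      push_cast
      rw [ih]
      norm_num
  linarith [(heq N) ▸ h]

lemma f_est (M : ℕ) (α : ℝ) (h0 : 0 ≤ α) (h1 : α ≤ 1) :
    |∑ m ∈ Finset.Icc 1 M, (m:ℝ) * (⌊α*m⌋₊:ℝ) - α * (M:ℝ)^3/3| ≤ 2*(M:ℝ)^2 := by
  obtain ⟨hs1, hs2⟩ := sum_sq_bounds M
  have ha : |∑ m ∈ Finset.Icc 1 M, (m:ℝ) * (⌊α*m⌋₊:ℝ)
      - α * ∑ m ∈ Finset.Icc 1 M, (m:ℝ)^2| ≤ (M:ℝ)^2 := by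
    rw [Finset.mul_sum, ← Finset.sum_sub_distrib]
    calc |∑ m ∈ Finset.Icc 1 M, ((m:ℝ) * (⌊α*m⌋₊:ℝ) - α * (m:ℝ)^2)|
        ≤ ∑ m ∈ Finset.Icc 1 M, |(m:ℝ) * (⌊α*m⌋₊:ℝ) - α * (m:ℝ)^2| :=
          Finset.abs_sum_le_sum_abs _ _
      _ ≤ ∑ m ∈ Finset.Icc 1 M, (m:ℝ) := by
          refine Finset.sum_le_sum (fun m hm => ?_)
          have hm0 : (0:ℝ) ≤ α * m := by positivity
          have hf1 : (⌊α*(m:ℝ)⌋₊:ℝ) ≤ α * m := Nat.floor_le hm0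
          have hf2 : α * (m:ℝ) - 1 < (⌊α*(m:ℝ)⌋₊:ℝ) := Nat.sub_one_lt_floor _
          have hmn : (0:ℝ) ≤ (m:ℝ) := Nat.cast_nonneg m
          rw [abs_le]
          constructor <;> nlinarith
      _ ≤ (M:ℝ)^2 := sum_id_le_sq M
  have hb : |α * ∑ m ∈ Finset.Icc 1 M, (m:ℝ)^2 - α * (M:ℝ)^3/3| ≤ (M:ℝ)^2 := by
    rw [abs_le]; constructor <;> nlinarith
  calc |∑ m ∈ Finset.Icc 1 M, (m:ℝ) * (⌊α*m⌋₊:ℝ) - α * (M:ℝ)^3/3|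
      ≤ |∑ m ∈ Finset.Icc 1 M, (m:ℝ) * (⌊α*m⌋₊:ℝ) - α * ∑ m ∈ Finset.Icc 1 M, (m:ℝ)^2|
        + |α * ∑ m ∈ Finset.Icc 1 M, (m:ℝ)^2 - α * (M:ℝ)^3/3| := abs_sub_le _ _ _
    _ ≤ 2*(M:ℝ)^2 := by linarith

lemma g_est (M : ℕ) (α : ℝ) (h0 : 0 ≤ α) (h1 : α ≤ 1) :
    |∑ m ∈ Finset.Icc 1 M, (⌊α*m⌋₊:ℝ)*((⌊α*m⌋₊:ℝ)+1)/2 - α^2 * (M:ℝ)^3/6| ≤ 2*(M:ℝ)^2 := by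
  obtain ⟨hs1, hs2⟩ := sum_sq_bounds M
  have ha : |∑ m ∈ Finset.Icc 1 M, (⌊α*m⌋₊:ℝ)*((⌊α*m⌋₊:ℝ)+1)/2
      - α^2/2 * ∑ m ∈ Finset.Icc 1 M, (m:ℝ)^2| ≤ (M:ℝ)^2 := by
    rw [Finset.mul_sum, ← Finset.sum_sub_distrib]
    calc |∑ m ∈ Finset.Icc 1 M, ((⌊α*m⌋₊:ℝ)*((⌊α*m⌋₊:ℝ)+1)/2 - α^2/2 * (m:ℝ)^2)|
        ≤ ∑ m ∈ Finset.Icc 1 M, |(⌊α*m⌋₊:ℝ)*((⌊α*m⌋₊:ℝ)+1)/2 - α^2/2 * (m:ℝ)^2| :=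
          Finset.abs_sum_le_sum_abs _ _
      _ ≤ ∑ m ∈ Finset.Icc 1 M, (m:ℝ) := by
          refine Finset.sum_le_sum (fun m hm => ?_)
          simp only [Finset.mem_Icc] at hm
          have hm1 : (1:ℝ) ≤ (m:ℝ) := by exact_mod_cast hm.1
          have hm0 : (0:ℝ) ≤ α * m := by positivity
          have hf1 : (⌊α*(m:ℝ)⌋₊:ℝ) ≤ α * m := Nat.floor_le hm0
          have hf2 : α * (m:ℝ) - 1 < (⌊α*(m:ℝ)⌋₊:ℝ) := Nat.sub_one_lt_floor _
          have hfn : (0:ℝ) ≤ (⌊α*(m:ℝ)⌋₊:ℝ) := Nat.cast_nonneg _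
          rw [abs_le]
          constructor <;> nlinarith
      _ ≤ (M:ℝ)^2 := sum_id_le_sq M
  have hb : |α^2/2 * ∑ m ∈ Finset.Icc 1 M, (m:ℝ)^2 - α^2 * (M:ℝ)^3/6| ≤ (M:ℝ)^2 := by
    have hc1 := mul_le_mul_of_nonneg_left hs1 (show (0:ℝ) ≤ α^2/2 by positivity)
    have hc2 := mul_le_mul_of_nonneg_left hs2 (show (0:ℝ) ≤ α^2/2 by positivity)
    have hc3 := mul_le_mul_of_nonneg_right (show α^2 ≤ 1 by nlinarith) (sq_nonneg (M:ℝ))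
    rw [abs_le]
    constructor <;> nlinarith [sq_nonneg (M:ℝ)]
  calc |∑ m ∈ Finset.Icc 1 M, (⌊α*m⌋₊:ℝ)*((⌊α*m⌋₊:ℝ)+1)/2 - α^2 * (M:ℝ)^3/6|
      ≤ |∑ m ∈ Finset.Icc 1 M, (⌊α*m⌋₊:ℝ)*((⌊α*m⌋₊:ℝ)+1)/2
          - α^2/2 * ∑ m ∈ Finset.Icc 1 M, (m:ℝ)^2|
        + |α^2/2 * ∑ m ∈ Finset.Icc 1 M, (m:ℝ)^2 - α^2 * (M:ℝ)^3/6| := abs_sub_le _ _ _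
    _ ≤ 2*(M:ℝ)^2 := by linarith

lemma dq3 (d N : ℕ) (hd : 1 ≤ d) (hdN : d ≤ N) :
    |(d:ℝ) * ((N/d : ℕ):ℝ)^3 - (N:ℝ)^3/(d:ℝ)^2| ≤ 3*(N:ℝ)^2/(d:ℝ) := by
  have hd0 : (0:ℝ) < d := by exact_mod_cast hd
  set q : ℝ := ((N/d : ℕ):ℝ) with hq
  have hq0 : 0 ≤ q := Nat.cast_nonneg _
  have hqd : q * d ≤ N := by
    rw [hq]; exact_mod_cast Nat.div_mul_le_self N d
  have hlt : (N:ℝ) < q * d + d := by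
    rw [hq]
    have h1 := Nat.div_add_mod N d
    have h2 := Nat.mod_lt N (show 0 < d by omega)
    push_cast
    nlinarith [show ((N % d : ℕ):ℝ) < d from by exact_mod_cast h2,
      show ((d:ℝ) * ((N/d : ℕ):ℝ) + ((N % d : ℕ):ℝ) = (N:ℝ)) from by exact_mod_cast h1]
  have hN0 : (0:ℝ) ≤ N := Nat.cast_nonneg _
  have ha0 : 0 ≤ q * (d:ℝ) := mul_nonneg hq0 hd0.le
  have hup : (q*(d:ℝ))^3 ≤ (N:ℝ)^3 := pow_le_pow_left₀ ha0 hqd 3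
  have hsub : (N:ℝ) - q*d ≤ d := by linarith
  have hquad : (N:ℝ)^2 + (N:ℝ)*(q*d) + (q*d)^2 ≤ 3*(N:ℝ)^2 := by nlinarith
  have hlow : (N:ℝ)^3 - (q*d)^3 ≤ (d:ℝ) * (3*(N:ℝ)^2) := by
    have h3 : (N:ℝ)^3 - (q*d)^3 = ((N:ℝ) - q*d)*((N:ℝ)^2 + (N:ℝ)*(q*d) + (q*d)^2) := by ring
    have hnn : 0 ≤ (N:ℝ)^2 + (N:ℝ)*(q*d) + (q*d)^2 := by positivity
    rw [h3]
    calc ((N:ℝ) - q*d)*((N:ℝ)^2 + (N:ℝ)*(q*d) + (q*d)^2)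
        ≤ (d:ℝ)*((N:ℝ)^2 + (N:ℝ)*(q*d) + (q*d)^2) := mul_le_mul_of_nonneg_right hsub hnn
      _ ≤ (d:ℝ)*(3*(N:ℝ)^2) := mul_le_mul_of_nonneg_left hquad hd0.le
  have key : |(d:ℝ)^3 * q^3 - (N:ℝ)^3| ≤ 3*(N:ℝ)^2*d := by
    rw [abs_le]
    constructor <;> nlinarith [hup, hlow]
  have heq : (d:ℝ) * q^3 - (N:ℝ)^3/(d:ℝ)^2 = ((d:ℝ)^3 * q^3 - (N:ℝ)^3)/(d:ℝ)^2 := by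
    field_simp
  rw [heq, abs_div, abs_of_pos (by positivity : (0:ℝ) < (d:ℝ)^2)]
  rw [div_le_div_iff₀ (by positivity) hd0]
  nlinarith [key, abs_nonneg ((d:ℝ)^3 * q^3 - (N:ℝ)^3)]

set_option maxHeartbeats 1000000 in
lemma assemble (N : ℕ) (u β : ℝ) (hN2 : 2 ≤ N) (hNu : (N:ℝ) ≤ u) (huN : u ≤ (N:ℝ)+1)
    (hu : 2 ≤ u) (hβ0 : 0 ≤ β) (hβ1 : β ≤ 1) (F : ℕ → ℝ)
    (hF : ∀ M : ℕ, |F M - β*(M:ℝ)^3| ≤ 2*(M:ℝ)^2) :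
    |(∑ d ∈ Finset.Icc 1 N, ((μ d : ℤ):ℝ) * ((d:ℝ) * F (N/d))) - 6/Real.pi^2 * u^3 * β|
      ≤ 25 * u^2 * Real.log u := by
  have hN1 : 1 ≤ N := by omega
  have hN0R : (0:ℝ) < N := by
    have : (0:ℕ) < N := by omega
    exact_mod_cast this
  have hu0 : (0:ℝ) < u := by linarith
  have hμ : ∀ d : ℕ, |((μ d : ℤ):ℝ)| ≤ 1 := fun d => by
    exact_mod_cast (abs_moebius_le_one (n := d))
  set S := ∑ d ∈ Finset.Icc 1 N, ((μ d : ℤ):ℝ) * ((d:ℝ) * F (N/d)) with hS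
  set T1 := ∑ d ∈ Finset.Icc 1 N, ((μ d : ℤ):ℝ) * ((d:ℝ) * (β * ((N/d : ℕ):ℝ)^3)) with hT1
  set T2 := ∑ d ∈ Finset.Icc 1 N, ((μ d : ℤ):ℝ) * (β * (N:ℝ)^3/(d:ℝ)^2) with hT2
  set T3 := β * (N:ℝ)^3 * (6/Real.pi^2) with hT3
  have hH := sum_inv_le N hN1
  -- |S - T1|
  have hST1 : |S - T1| ≤ 2*(N:ℝ)^2*(1 + Real.log N) := by
    rw [hS, hT1, ← Finset.sum_sub_distrib]
    refine (Finset.abs_sum_le_sum_abs _ _).trans ?_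
    have hper : ∀ d ∈ Finset.Icc 1 N,
        |((μ d : ℤ):ℝ) * ((d:ℝ) * F (N/d)) - ((μ d : ℤ):ℝ) * ((d:ℝ) * (β * ((N/d : ℕ):ℝ)^3))|
          ≤ 2*(N:ℝ)^2 * (1/(d:ℝ)) := by
      intro d hd
      simp only [Finset.mem_Icc] at hd
      have hd0 : (0:ℝ) < d := by exact_mod_cast hd.1
      have hq0 : (0:ℝ) ≤ ((N/d : ℕ):ℝ) := Nat.cast_nonneg _
      have hqd : ((N/d : ℕ):ℝ) * d ≤ N := by exact_mod_cast Nat.div_mul_le_self N d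
      rw [← mul_sub, ← mul_sub, abs_mul, abs_mul]
      have h2 : |(d:ℝ)| = (d:ℝ) := abs_of_pos hd0
      rw [h2]
      calc |((μ d : ℤ):ℝ)| * ((d:ℝ) * |F (N/d) - β * ((N/d : ℕ):ℝ)^3|)
          ≤ 1 * ((d:ℝ) * (2*((N/d : ℕ):ℝ)^2)) := by
            refine mul_le_mul (hμ d) (mul_le_mul_of_nonneg_left (hF (N/d)) hd0.le)
              (by positivity) (by norm_num)
        _ ≤ 2*(N:ℝ)^2 * (1/(d:ℝ)) := by
            rw [one_mul, mul_one_div, le_div_iff₀ hd0]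
            nlinarith [mul_le_mul hqd hqd (by positivity : (0:ℝ) ≤ ((N/d : ℕ):ℝ) * d) (Nat.cast_nonneg N)]
    refine (Finset.sum_le_sum hper).trans ?_
    rw [← Finset.mul_sum]
    exact mul_le_mul_of_nonneg_left hH (by positivity)
  -- |T1 - T2|
  have hT1T2 : |T1 - T2| ≤ 3*(N:ℝ)^2*(1 + Real.log N) := by
    rw [hT1, hT2, ← Finset.sum_sub_distrib]
    refine (Finset.abs_sum_le_sum_abs _ _).trans ?_
    have hper : ∀ d ∈ Finset.Icc 1 N,
        |((μ d : ℤ):ℝ) * ((d:ℝ) * (β * ((N/d : ℕ):ℝ)^3)) - ((μ d : ℤ):ℝ) * (β * (N:ℝ)^3/(d:ℝ)^2)|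
          ≤ 3*(N:ℝ)^2 * (1/(d:ℝ)) := by
      intro d hd
      simp only [Finset.mem_Icc] at hd
      have hd0 : (0:ℝ) < d := by exact_mod_cast hd.1
      have hdq := dq3 d N hd.1 hd.2
      have heq : ((μ d : ℤ):ℝ) * ((d:ℝ) * (β * ((N/d : ℕ):ℝ)^3)) - ((μ d : ℤ):ℝ) * (β * (N:ℝ)^3/(d:ℝ)^2)
          = ((μ d : ℤ):ℝ) * β * ((d:ℝ) * ((N/d : ℕ):ℝ)^3 - (N:ℝ)^3/(d:ℝ)^2) := by ring
      rw [heq, abs_mul, abs_mul, abs_of_nonneg hβ0]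
      calc |((μ d : ℤ):ℝ)| * β * |(d:ℝ) * ((N/d : ℕ):ℝ)^3 - (N:ℝ)^3/(d:ℝ)^2|
          ≤ 1 * 1 * (3*(N:ℝ)^2/(d:ℝ)) := by
            refine mul_le_mul (mul_le_mul (hμ d) hβ1 hβ0 (by norm_num)) hdq (abs_nonneg _) (by norm_num)
        _ = 3*(N:ℝ)^2 * (1/(d:ℝ)) := by ring
    refine (Finset.sum_le_sum hper).trans ?_
    rw [← Finset.mul_sum]
    exact mul_le_mul_of_nonneg_left hH (by positivity)
  -- |T2 - T3|
  have hT2T3 : |T2 - T3| ≤ (N:ℝ)^2 := by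
    have hT2' : T2 = β * (N:ℝ)^3 * (∑ d ∈ Finset.Icc 1 N, ((μ d : ℤ):ℝ)/(d:ℝ)^2) := by
      rw [hT2, Finset.mul_sum]
      exact Finset.sum_congr rfl (fun d _ => by ring)
    have hmp := moebius_partial N hN1
    rw [hT2', hT3, ← mul_sub, abs_mul]
    have h1 : |β * (N:ℝ)^3| ≤ (N:ℝ)^3 := by
      rw [abs_mul, abs_of_nonneg hβ0, abs_of_pos (by positivity)]
      nlinarith [pow_pos hN0R 3]
    calc |β * (N:ℝ)^3| * |(∑ d ∈ Finset.Icc 1 N, ((μ d : ℤ):ℝ)/(d:ℝ)^2) - 6/Real.pi^2|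
        ≤ (N:ℝ)^3 * (1/(N:ℝ)) :=
          mul_le_mul h1 hmp (abs_nonneg _) (by positivity)
      _ = (N:ℝ)^2 := by field_simp
  -- |T3 - target|
  have hπ2 : (9:ℝ) ≤ Real.pi^2 := by nlinarith [Real.pi_gt_three]
  have hcub0 : 0 ≤ u^3 - (N:ℝ)^3 := by
    nlinarith [pow_le_pow_left₀ hN0R.le hNu 3]
  have hNu2' : (N:ℝ)^2 ≤ u^2 := by nlinarith
  have hcube : u^3 - (N:ℝ)^3 ≤ 3*u^2 := by
    have hq : u^2 + u*(N:ℝ) + (N:ℝ)^2 ≤ 3*u^2 := by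
      nlinarith [mul_le_mul_of_nonneg_left hNu hu0.le]
    have he : u - (N:ℝ) ≤ 1 := by linarith
    have h3 : u^3 - (N:ℝ)^3 = (u - (N:ℝ))*(u^2 + u*(N:ℝ) + (N:ℝ)^2) := by ring
    rw [h3]
    calc (u - (N:ℝ))*(u^2 + u*(N:ℝ) + (N:ℝ)^2) ≤ 1*(u^2 + u*(N:ℝ) + (N:ℝ)^2) :=
          mul_le_mul_of_nonneg_right he (by nlinarith)
      _ ≤ 3*u^2 := by linarith
  have hT3tgt : |T3 - 6/Real.pi^2 * u^3 * β| ≤ 3*u^2 := by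
    have h6 : 6/Real.pi^2 ≤ 1 := by
      rw [div_le_one (by positivity)]; linarith
    have heq : T3 - 6/Real.pi^2 * u^3 * β = -((6/Real.pi^2 * β) * (u^3 - (N:ℝ)^3)) := by
      rw [hT3]; ring
    rw [heq, abs_neg, abs_of_nonneg (by positivity)]
    have he : 6/Real.pi^2 * β ≤ 1 := by
      calc 6/Real.pi^2 * β ≤ 1 * 1 := mul_le_mul h6 hβ1 hβ0 (by norm_num)
        _ = 1 := by norm_num
    calc 6/Real.pi^2 * β * (u^3 - (N:ℝ)^3) ≤ 1 * (u^3 - (N:ℝ)^3) :=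
          mul_le_mul_of_nonneg_right he hcub0
      _ ≤ 3*u^2 := by linarith
  -- combine
  have htri : |S - 6/Real.pi^2 * u^3 * β| ≤ |S - T1| + |T1 - T2| + |T2 - T3| + |T3 - 6/Real.pi^2 * u^3 * β| := by
    have a1 := abs_sub_le S T1 (6/Real.pi^2 * u^3 * β)
    have a2 := abs_sub_le T1 T2 (6/Real.pi^2 * u^3 * β)
    have a3 := abs_sub_le T2 T3 (6/Real.pi^2 * u^3 * β)
    linarith
  have hlogu2 : Real.log 2 ≤ Real.log u := Real.log_le_log (by norm_num) hu
  have hlog2 : (0.6931471803:ℝ) < Real.log 2 := Real.log_two_gt_d9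
  have h1log : 1 ≤ 2*Real.log u := by linarith
  have hlogN : Real.log N ≤ Real.log u := Real.log_le_log hN0R hNu
  have hlogN0 : 0 ≤ Real.log N := Real.log_nonneg (by exact_mod_cast hN1)
  have hNu2 : (N:ℝ)^2 ≤ u^2 := by nlinarith
  have hA : (N:ℝ)^2*(1+Real.log N) ≤ u^2 * (3*Real.log u) := by
    have h13 : 1 + Real.log N ≤ 3*Real.log u := by linarith
    calc (N:ℝ)^2*(1+Real.log N) ≤ u^2*(1+Real.log N) :=
          mul_le_mul_of_nonneg_right hNu2 (by linarith)
      _ ≤ u^2 * (3*Real.log u) := mul_le_mul_of_nonneg_left h13 (by positivity)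
  have hB : (N:ℝ)^2 ≤ u^2*(2*Real.log u) := by
    calc (N:ℝ)^2 ≤ u^2 := hNu2
      _ ≤ u^2*(2*Real.log u) := le_mul_of_one_le_right (by positivity) h1log
  have hC : 3*u^2 ≤ u^2*(6*Real.log u) := by nlinarith [sq_nonneg u]
  calc |S - 6/Real.pi^2 * u^3 * β| ≤ |S - T1| + |T1 - T2| + |T2 - T3| + |T3 - 6/Real.pi^2 * u^3 * β| := htri
    _ ≤ 2*(N:ℝ)^2*(1 + Real.log N) + 3*(N:ℝ)^2*(1 + Real.log N) + (N:ℝ)^2 + 3*u^2 := by linarith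
    _ ≤ 25 * u^2 * Real.log u := by nlinarith [hA, hB, hC]

theorem R_asymptotics :
    ∃ C : ℝ, 0 < C ∧ ∀ u α : ℝ, 2 ≤ u → 0 ≤ α → α ≤ 1 →
      |Rx u α - 2 / Real.pi ^ 2 * u ^ 3 * α| ≤ C * u ^ 2 * Real.log u ∧
      |Ry u α - 1 / Real.pi ^ 2 * u ^ 3 * α ^ 2| ≤ C * u ^ 2 * Real.log u := by
  refine ⟨25, by norm_num, fun u α hu h0 h1 => ?_⟩
  have hN2 : 2 ≤ ⌊u⌋₊ := Nat.le_floor (by exact_mod_cast hu)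
  have hNu : ((⌊u⌋₊:ℕ):ℝ) ≤ u := Nat.floor_le (by linarith)
  have huN : u ≤ ((⌊u⌋₊:ℕ):ℝ) + 1 := (Nat.lt_floor_add_one u).le
  constructor
  · -- Rx
    have hkey := key_double ⌊u⌋₊ α h0 h1 (fun x _ => (x:ℝ))
    have hRx : Rx u α = ∑ d ∈ Finset.Icc 1 ⌊u⌋₊, ((μ d : ℤ):ℝ) *
        ((d:ℝ) * ∑ m ∈ Finset.Icc 1 (⌊u⌋₊/d), (m:ℝ) * (⌊α*m⌋₊:ℝ)) := by
      rw [Rx, hkey]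
      refine Finset.sum_congr rfl (fun d _ => ?_)
      congr 1
      rw [Finset.mul_sum]
      refine Finset.sum_congr rfl (fun m _ => ?_)
      rw [Finset.sum_const, Nat.card_Icc, nsmul_eq_mul]
      push_cast [Nat.add_sub_cancel]
      ring
    have hF : ∀ M : ℕ, |(∑ m ∈ Finset.Icc 1 M, (m:ℝ) * (⌊α*m⌋₊:ℝ)) - (α/3)*(M:ℝ)^3|
        ≤ 2*(M:ℝ)^2 := by
      intro M
      have h := f_est M α h0 h1
      have e : α * (M:ℝ)^3/3 = α/3*(M:ℝ)^3 := by ring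
      rwa [e] at h
    have := assemble ⌊u⌋₊ u (α/3) hN2 hNu huN hu (by linarith) (by linarith)
      (fun M => ∑ m ∈ Finset.Icc 1 M, (m:ℝ) * (⌊α*m⌋₊:ℝ)) hF
    rw [← hRx] at this
    have e2 : 6/Real.pi^2 * u^3 * (α/3) = 2/Real.pi^2 * u^3 * α := by ring
    rw [e2] at this
    calc |Rx u α - 2 / Real.pi ^ 2 * u ^ 3 * α| = |Rx u α - 2/Real.pi^2 * u^3 * α| := by norm_num
      _ ≤ 25 * u^2 * Real.log u := this
  · -- Ry
    have hkey := key_double ⌊u⌋₊ α h0 h1 (fun _ y => (y:ℝ))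
    have hRy : Ry u α = ∑ d ∈ Finset.Icc 1 ⌊u⌋₊, ((μ d : ℤ):ℝ) *
        ((d:ℝ) * ∑ m ∈ Finset.Icc 1 (⌊u⌋₊/d), (⌊α*m⌋₊:ℝ)*((⌊α*m⌋₊:ℝ)+1)/2) := by
      rw [Ry, hkey]
      refine Finset.sum_congr rfl (fun d _ => ?_)
      congr 1
      rw [Finset.mul_sum]
      refine Finset.sum_congr rfl (fun m _ => ?_)
      have h1' : ∑ k ∈ Finset.Icc 1 ⌊α*(m:ℝ)⌋₊, ((d*k : ℕ):ℝ)
          = (d:ℝ) * ∑ k ∈ Finset.Icc 1 ⌊α*(m:ℝ)⌋₊, (k:ℝ) := by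
        rw [Finset.mul_sum]
        exact Finset.sum_congr rfl (fun k _ => by push_cast; ring)
      rw [h1', sum_Icc_id]
    have hα2 : α^2 ≤ 1 := by nlinarith
    have hF : ∀ M : ℕ, |(∑ m ∈ Finset.Icc 1 M, (⌊α*m⌋₊:ℝ)*((⌊α*m⌋₊:ℝ)+1)/2) - (α^2/6)*(M:ℝ)^3|
        ≤ 2*(M:ℝ)^2 := by
      intro M
      have h := g_est M α h0 h1
      have e : α^2 * (M:ℝ)^3/6 = α^2/6*(M:ℝ)^3 := by ring
      rwa [e] at h
    have := assemble ⌊u⌋₊ u (α^2/6) hN2 hNu huN hu (by positivity) (by linarith)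
      (fun M => ∑ m ∈ Finset.Icc 1 M, (⌊α*m⌋₊:ℝ)*((⌊α*m⌋₊:ℝ)+1)/2) hF
    rw [← hRy] at this
    have e2 : 6/Real.pi^2 * u^3 * (α^2/6) = 1/Real.pi^2 * u^3 * α^2 := by ring
    rw [e2] at this
    calc |Ry u α - 1 / Real.pi ^ 2 * u ^ 3 * α ^ 2| = |Ry u α - 1/Real.pi^2 * u^3 * α^2| := by norm_num
      _ ≤ 25 * u^2 * Real.log u := this
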